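/- arXiv:1811.01456 — 3 statements merged into one kernel-verified Lean document; each statement's English description precedes it below -/
import Mathlib

section
/- Two superequivalences ℐ and ℐ' on a set S permute (ℐ ∘ ℐ' = ℐ' ∘ ℐ) if and only if their join in the lattice of superequivalences equals ℐ ∘ ℐ'. -/
open Set

variable {α : Type*}

/-- An ideal in the lattice of binary relations on a set: nonempty, downward
closed, and closed under finite unions (= finite joins). -/
def IsIdeal (ℐ : Set (Set (α × α))) : Prop :=
  ℐ.Nonempty ∧ (∀ R ∈ ℐ, ∀ T ⊆ R, T ∈ ℐ) ∧ (∀ R ∈ ℐ, ∀ S ∈ ℐ, R ∪ S ∈ ℐ)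

/-- A superequivalence: an ideal of relations containing the diagonal, closed
under relational opposites, and closed under composition of relations. -/
def IsSuperEq (ℐ : Set (Set (α × α))) : Prop :=
  IsIdeal ℐ ∧ SetRel.id ∈ ℐ ∧ (∀ R ∈ ℐ, Prod.swap ⁻¹' R ∈ ℐ) ∧
    (∀ R ∈ ℐ, ∀ S ∈ ℐ, SetRel.comp R S ∈ ℐ)

/-- Composition of ideals of relations: the ideal generated by the compositions
`R ○ S` of members (this generating family is directed, so the generated ideal
is its downward closure). -/
def idealComp (ℐ 𝒥 : Set (Set (α × α))) : Set (Set (α × α)) :=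
  {T | ∃ R ∈ ℐ, ∃ S ∈ 𝒥, T ⊆ SetRel.comp R S}

/-- Composition of a nonempty list of relations. -/
def listComp : List (Set (α × α)) → Set (α × α)
  | [] => SetRel.id
  | [R] => R
  | R :: S :: l => SetRel.comp R (listComp (S :: l))

/-- The ideal of relations generated by a set `G` of relations: everything
below a finite union of members of `G`. -/
def idealGen (G : Set (Set (α × α))) : Set (Set (α × α)) :=
  {T | ∃ s : Finset (Set (α × α)), ↑s ⊆ G ∧ T ⊆ ⋃₀ ↑s}

/-- The set of finite (nonempty) compositions of relations from `X`. -/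
def comps (X : Set (Set (α × α))) : Set (Set (α × α)) :=
  {T | ∃ l : List (Set (α × α)), l ≠ [] ∧ (∀ R ∈ l, R ∈ X) ∧ T = listComp l}

/-- The join of two superequivalences: the ideal generated by all finite
compositions of relations from their union. -/
def seJoin (ℐ 𝒥 : Set (Set (α × α))) : Set (Set (α × α)) :=
  idealGen (comps (ℐ ∪ 𝒥))

/-- The join of a family of superequivalences. -/
def seSup (S : Set (Set (Set (α × α)))) : Set (Set (α × α)) :=
  idealGen (comps (⋃₀ S))

lemma swap_preimage_compRel (R S : Set (α × α)) :
    Prod.swap ⁻¹' SetRel.comp R S = SetRel.comp (Prod.swap ⁻¹' S) (Prod.swap ⁻¹' R) := by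
  ext ⟨x, y⟩
  simp only [mem_preimage, Prod.swap_prod_mk, SetRel.mem_comp, mem_preimage]
  exact ⟨fun ⟨z, h1, h2⟩ => ⟨z, h2, h1⟩, fun ⟨z, h1, h2⟩ => ⟨z, h2, h1⟩⟩

lemma mem_ic {ℐ 𝒥 : Set (Set (α × α))} {R S T : Set (α × α)} (hR : R ∈ ℐ) (hS : S ∈ 𝒥)
    (h : T ⊆ SetRel.comp R S) : T ∈ idealComp ℐ 𝒥 := ⟨R, hR, S, hS, h⟩


lemma pair_mem_comps {X : Set (Set (α × α))} {R S : Set (α × α)} (h1 : R ∈ X) (h2 : S ∈ X) :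
    SetRel.comp R S ∈ comps X := by
  refine ⟨[R, S], by simp, ?_, rfl⟩
  intro x hx
  simp only [List.mem_cons, List.not_mem_nil, or_false] at hx
  rcases hx with rfl | rfl
  exacts [h1, h2]

lemma mem_gen {X : Set (Set (α × α))} {T C : Set (α × α)} (hC : C ∈ comps X) (hT : T ⊆ C) :
    T ∈ idealGen (comps X) :=
  ⟨{C}, by simpa using hC, by simpa using hT⟩

theorem stmt6 (ℐ 𝒥 : Set (Set (α × α))) (hI : IsSuperEq ℐ) (hJ : IsSuperEq 𝒥) :
    idealComp ℐ 𝒥 = idealComp 𝒥 ℐ ↔ seJoin ℐ 𝒥 = idealComp ℐ 𝒥 := by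
  obtain ⟨⟨-, hIdown, hIun⟩, hIid, hIsw, hIcomp⟩ := hI
  obtain ⟨⟨-, hJdown, hJun⟩, hJid, hJsw, hJcomp⟩ := hJ
  -- ℐ ⊆ K and 𝒥 ⊆ K
  have hIK : ∀ R ∈ ℐ, R ∈ idealComp ℐ 𝒥 := fun R hR =>
    mem_ic hR hJid ((SetRel.comp_id R).superset)
  have hJK : ∀ S ∈ 𝒥, S ∈ idealComp ℐ 𝒥 := fun S hS =>
    mem_ic hIid hS ((SetRel.id_comp S).superset)
  constructor
  · intro hperm
    -- K is closed under composition
    have hKcomp : ∀ T ∈ idealComp ℐ 𝒥, ∀ T' ∈ idealComp ℐ 𝒥,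
        SetRel.comp T T' ∈ idealComp ℐ 𝒥 := by
      rintro T ⟨R, hR, S, hS, hT⟩ T' ⟨R', hR', S', hS', hT'⟩
      have hSR' : SetRel.comp S R' ∈ idealComp ℐ 𝒥 := by
        rw [hperm]; exact mem_ic hS hR' Subset.rfl
      obtain ⟨R'', hR'', S'', hS'', hmid⟩ := hSR'
      refine mem_ic (hIcomp R hR R'' hR'') (hJcomp S'' hS'' S' hS') ?_
      refine (SetRel.comp_subset_comp hT hT').trans ?_
      rw [SetRel.comp_assoc, SetRel.comp_assoc]
      refine SetRel.comp_subset_comp Subset.rfl ?_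
      rw [← SetRel.comp_assoc, ← SetRel.comp_assoc]
      exact SetRel.comp_subset_comp hmid Subset.rfl
    have hKun : ∀ T ∈ idealComp ℐ 𝒥, ∀ T' ∈ idealComp ℐ 𝒥, T ∪ T' ∈ idealComp ℐ 𝒥 := by
      rintro T ⟨R, hR, S, hS, hT⟩ T' ⟨R', hR', S', hS', hT'⟩
      refine mem_ic (hIun R hR R' hR') (hJun S hS S' hS') (union_subset ?_ ?_)
      · exact hT.trans (SetRel.comp_subset_comp subset_union_left subset_union_left)
      · exact hT'.trans (SetRel.comp_subset_comp subset_union_right subset_union_right)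
    have hlist : ∀ l : List (Set (α × α)), l ≠ [] → (∀ R ∈ l, R ∈ ℐ ∪ 𝒥) →
        listComp l ∈ idealComp ℐ 𝒥 := by
      intro l
      induction l with
      | nil => intro h _; exact absurd rfl h
      | cons R l ihl =>
        intro _ hlmem
        cases l with
        | nil =>
          rcases hlmem R (by simp) with h | h
          exacts [hIK R h, hJK R h]
        | cons S l' =>
          have h1 : R ∈ idealComp ℐ 𝒥 := by
            rcases hlmem R (by simp) with h | h
            exacts [hIK R h, hJK R h]
          have h2 : listComp (S :: l') ∈ idealComp ℐ 𝒥 :=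
            ihl (by simp) (fun x hx => hlmem x (by simp [hx]))
          exact hKcomp R h1 _ h2
    have hsU : ∀ s : Finset (Set (α × α)), ↑s ⊆ comps (ℐ ∪ 𝒥) →
        (⋃₀ ↑s : Set (α × α)) ∈ idealComp ℐ 𝒥 := by
      classical
      intro s
      induction s using Finset.induction_on with
      | empty => intro _; exact mem_ic hIid hJid (by simp)
      | insert a t hx ih =>
        intro hs
        simp only [Finset.coe_insert, sUnion_insert]
        have ha : a ∈ comps (ℐ ∪ 𝒥) := hs (by simp)
        obtain ⟨l, hlne, hlmem, rfl⟩ := ha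
        refine hKun _ (hlist l hlne hlmem) _ (ih ?_)
        intro x hxt
        exact hs (by simp only [Finset.coe_insert, mem_insert_iff]; exact Or.inr hxt)
    ext T
    constructor
    · rintro ⟨s, hs, hT⟩
      obtain ⟨R, hR, S, hS, hsub⟩ := hsU s hs
      exact mem_ic hR hS (hT.trans hsub)
    · rintro ⟨R, hR, S, hS, hT⟩
      exact mem_gen (pair_mem_comps (Or.inl hR) (Or.inr hS)) hT
  · intro hjoin
    have h1 : idealComp 𝒥 ℐ ⊆ idealComp ℐ 𝒥 := by
      rintro T ⟨S, hS, R, hR, hT⟩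
      rw [← hjoin]
      exact mem_gen (pair_mem_comps (Or.inr hS) (Or.inl hR)) hT
    refine Subset.antisymm ?_ h1
    rintro T ⟨R, hR, S, hS, hT⟩
    have hswT : Prod.swap ⁻¹' T ∈ idealComp ℐ 𝒥 := by
      apply h1
      refine mem_ic (hJsw S hS) (hIsw R hR) ?_
      rw [← swap_preimage_compRel]
      exact preimage_mono hT
    obtain ⟨R', hR', S', hS', hsub⟩ := hswT
    refine mem_ic (hJsw S' hS') (hIsw R' hR') ?_
    rw [← swap_preimage_compRel]
    intro x hx
    have : x.swap ∈ Prod.swap ⁻¹' T := by simpa using hx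
    exact hsub this
end

section
/- (Shifting Lemma for superequivalences) Let A be an algebra in a congruence-modular variety with Day terms, let ℛ be a compatible ideal of relations on A containing the diagonal and closed under opposites, and let ℐ₁, ℐ₂ be compatible superequivalences on A with ℛ ∧ ℐ₁ ≤ ℐ₂ ≤ ℐ₁. Then (ℛ ∘ (ℐ₁ ∧ ℐ₂) ∘ ℛ) ∧ ℐ₁ ≤ ℐ₂. -/
open Set

variable {α : Type*}

variable {A : Type*} {ι : Type*} {ar : ι → ℕ}

/-- Terms over a signature (operation symbols `ι` with arities `ar`) in `n` variables. -/
inductive Term (ι : Type*) (ar : ι → ℕ) (n : ℕ) : Type _ where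
  | var : Fin n → Term ι ar n
  | app : (i : ι) → (Fin (ar i) → Term ι ar n) → Term ι ar n

/-- Evaluation of a term in an algebra `A` with operations `ops`. -/
def Term.eval {A : Type*} {ι : Type*} {ar : ι → ℕ} {n : ℕ}
    (ops : ∀ i, (Fin (ar i) → A) → A) (v : Fin n → A) : Term ι ar n → A
  | Term.var k => v k
  | Term.app i ts => ops i fun j => Term.eval ops v (ts j)

/-- Componentwise image of a tuple of relations under an `n`-ary operation. -/
def opImg {A : Type*} {n : ℕ} (w : (Fin n → A) → A) (R : Fin n → Set (A × A)) :
    Set (A × A) :=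
  {p | ∃ a b : Fin n → A, (∀ k, (a k, b k) ∈ R k) ∧ p = (w a, w b)}

/-- A set (ideal) of relations on the algebra `A` is compatible if it is closed
under componentwise images of the basic operations. -/
def seCompatible (ops : ∀ i, (Fin (ar i) → A) → A) (ℐ : Set (Set (A × A))) : Prop :=
  ∀ i, ∀ R : Fin (ar i) → Set (A × A), (∀ k, R k ∈ ℐ) → opImg (ops i) R ∈ ℐ

/-- `m 0, …, m d` is a sequence of Day terms for the algebra `(A, ops)`. -/
def DayTerms (ops : ∀ i, (Fin (ar i) → A) → A) (m : ℕ → Term ι ar 4) (d : ℕ) : Prop :=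
  (∀ i ≤ d, ∀ x y : A, (m i).eval ops ![x, y, y, x] = x) ∧
  (∀ x y z w : A, (m 0).eval ops ![x, y, z, w] = x) ∧
  (∀ x y z w : A, (m d).eval ops ![x, y, z, w] = w) ∧
  (∀ i < d, Even i → ∀ x y : A,
    (m i).eval ops ![x, x, y, y] = (m (i + 1)).eval ops ![x, x, y, y]) ∧
  (∀ i < d, Odd i → ∀ x y z : A,
    (m i).eval ops ![x, y, y, z] = (m (i + 1)).eval ops ![x, y, y, z])

/-- Componentwise image of a tuple of relations under a term. -/
def termImg {n : ℕ} (ops : ∀ i, (Fin (ar i) → A) → A) (t : Term ι ar n)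
    (R : Fin n → Set (A × A)) : Set (A × A) :=
  {p | ∃ a b : Fin n → A, (∀ k, (a k, b k) ∈ R k) ∧ p = (t.eval ops a, t.eval ops b)}

lemma mem_termImg {n : ℕ} (ops : ∀ i, (Fin (ar i) → A) → A) (t : Term ι ar n)
    {R : Fin n → Set (A × A)} {a b : Fin n → A} (hab : ∀ k, (a k, b k) ∈ R k) :
    (t.eval ops a, t.eval ops b) ∈ termImg ops t R :=
  ⟨a, b, hab, rfl⟩

lemma termImg_mem {n : ℕ} {ops : ∀ i, (Fin (ar i) → A) → A} {ℐ : Set (Set (A × A))}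
    (hdc : ∀ R ∈ ℐ, ∀ T ⊆ R, T ∈ ℐ) (hcomp : seCompatible ops ℐ)
    (t : Term ι ar n) {R : Fin n → Set (A × A)} (hR : ∀ k, R k ∈ ℐ) :
    termImg ops t R ∈ ℐ := by
  induction t with
  | var k =>
    refine hdc _ (hR k) _ ?_
    rintro p ⟨a, b, hab, rfl⟩
    exact hab k
  | app i ts ih =>
    refine hdc _ (hcomp i (fun j => termImg ops (ts j) R) fun j => ih j) _ ?_
    rintro p ⟨a, b, hab, rfl⟩
    exact ⟨fun j => (ts j).eval ops a, fun j => (ts j).eval ops b,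
      fun j => ⟨a, b, hab, rfl⟩, rfl⟩

lemma forall_fin4 {P : Fin 4 → Prop} (h0 : P 0) (h1 : P 1) (h2 : P 2) (h3 : P 3) :
    ∀ k, P k := by
  intro k
  fin_cases k <;> assumption

theorem stmt14 (ops : ∀ i, (Fin (ar i) → A) → A) (m : ℕ → Term ι ar 4) (d : ℕ)
    (hday : DayTerms ops m d)
    (ℛ : Set (Set (A × A))) (hR : IsIdeal ℛ) (hRrefl : SetRel.id ∈ ℛ)
    (hRsymm : ∀ R ∈ ℛ, Prod.swap ⁻¹' R ∈ ℛ) (hRcomp : seCompatible ops ℛ)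
    (ℐ₁ ℐ₂ : Set (Set (A × A)))
    (h1 : IsSuperEq ℐ₁) (h1c : seCompatible ops ℐ₁)
    (h2 : IsSuperEq ℐ₂) (h2c : seCompatible ops ℐ₂)
    (hle : ℛ ∩ ℐ₁ ⊆ ℐ₂) (hle2 : ℐ₂ ⊆ ℐ₁) :
    idealComp ℛ (idealComp (ℐ₁ ∩ ℐ₂) ℛ) ∩ ℐ₁ ⊆ ℐ₂ := by
  obtain ⟨hday1, hday0, haydd, hdayE, hdayO⟩ := hday
  obtain ⟨-, hRdc, -⟩ := hR
  obtain ⟨⟨-, h1dc, -⟩, h1id, h1sw, h1co⟩ := h1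
  obtain ⟨⟨-, h2dc, -⟩, h2id, h2sw, h2co⟩ := h2
  rintro T ⟨⟨R₁, hR₁, S', ⟨S, hS, R₂, hR₂, hS'sub⟩, hTsub⟩, hT1⟩
  -- the relations appearing in the Day-term chain
  set P : ℕ → Set (A × A) := fun i =>
    termImg ops (m i) ![SetRel.id, R₁, Prod.swap ⁻¹' R₂, SetRel.id] with hPdef
  set W1 : ℕ → Set (A × A) := fun i =>
    termImg ops (m i) ![SetRel.id, SetRel.id, Prod.swap ⁻¹' T, Prod.swap ⁻¹' T] with hW1def
  set W2 : ℕ → Set (A × A) := fun i =>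
    termImg ops (m i) ![SetRel.id, SetRel.id, Prod.swap ⁻¹' S, Prod.swap ⁻¹' T] with hW2def
  set E : ℕ → Set (A × A) := fun i =>
    P i ∩ SetRel.comp (W1 i) (Prod.swap ⁻¹' (W2 i)) with hEdef
  set M : ℕ → Set (A × A) := fun i =>
    SetRel.comp (termImg ops (m i) ![SetRel.id, SetRel.id, Prod.swap ⁻¹' S, SetRel.id])
      (termImg ops (m (i + 1)) ![SetRel.id, SetRel.id, S, SetRel.id]) with hMdef
  have hE2 : ∀ i, E i ∈ ℐ₂ := by
    intro i
    have hP : P i ∈ ℛ := termImg_mem hRdc hRcomp (m i)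
      (forall_fin4 hRrefl hR₁ (hRsymm R₂ hR₂) hRrefl)
    have hW1 : W1 i ∈ ℐ₁ := termImg_mem h1dc h1c (m i)
      (forall_fin4 h1id h1id (h1sw T hT1) (h1sw T hT1))
    have hW2 : W2 i ∈ ℐ₁ := termImg_mem h1dc h1c (m i)
      (forall_fin4 h1id h1id (h1sw S hS.1) (h1sw T hT1))
    exact hle ⟨hRdc _ hP _ inter_subset_left,
      h1dc _ (h1co _ hW1 _ (h1sw _ hW2)) _ inter_subset_right⟩
  have hM2 : ∀ i, M i ∈ ℐ₂ := by
    intro i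
    exact h2co _ (termImg_mem h2dc h2c (m i)
        (forall_fin4 h2id h2id (h2sw S hS.2) h2id)) _
      (termImg_mem h2dc h2c (m (i + 1)) (forall_fin4 h2id h2id hS.2 h2id))
  -- pointwise membership in `E i`
  have hEmem : ∀ i ≤ d, ∀ x y z w : A, (x, w) ∈ T → (x, y) ∈ R₁ → (y, z) ∈ S →
      (z, w) ∈ R₂ →
      ((m i).eval ops ![x, x, w, w], (m i).eval ops ![x, y, z, w]) ∈ E i := by
    intro i hi x y z w hxw hxy hyz hzw
    constructor
    · exact mem_termImg ops (m i)
        (a := ![x, x, w, w]) (b := ![x, y, z, w])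
        (forall_fin4 rfl hxy hzw rfl)
    · refine ⟨x, ?_, ?_⟩
      · have := mem_termImg ops (m i)
          (R := ![SetRel.id, SetRel.id, Prod.swap ⁻¹' T, Prod.swap ⁻¹' T])
          (a := ![x, x, w, w]) (b := ![x, x, x, x])
          (forall_fin4 rfl rfl hxw hxw)
        rwa [hday1 i hi x x] at this
      · show ((m i).eval ops ![x, y, z, w], x) ∈ W2 i
        have := mem_termImg ops (m i)
          (R := ![SetRel.id, SetRel.id, Prod.swap ⁻¹' S, Prod.swap ⁻¹' T])
          (a := ![x, y, z, w]) (b := ![x, y, y, x])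
          (forall_fin4 rfl rfl hyz hxw)
        rwa [hday1 i hi x y] at this
  -- pointwise membership in `M i` at odd steps
  have hMmem : ∀ i < d, Odd i → ∀ x y z w : A, (y, z) ∈ S →
      ((m i).eval ops ![x, y, z, w], (m (i + 1)).eval ops ![x, y, z, w]) ∈ M i := by
    intro i hi hodd x y z w hyz
    refine ⟨(m i).eval ops ![x, y, y, w], ?_, ?_⟩
    · exact mem_termImg ops (m i)
        (a := ![x, y, z, w]) (b := ![x, y, y, w])
        (forall_fin4 rfl rfl hyz rfl)
    · have := mem_termImg ops (m (i + 1))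
        (R := ![SetRel.id, SetRel.id, S, SetRel.id])
        (a := ![x, y, y, w]) (b := ![x, y, z, w])
        (forall_fin4 rfl rfl hyz rfl)
      rwa [← hdayO i hi hodd x y w] at this
  -- build the chain by induction
  have key : ∀ k ≤ d, ∃ W ∈ ℐ₂, ∀ x y z w : A, (x, w) ∈ T → (x, y) ∈ R₁ →
      (y, z) ∈ S → (z, w) ∈ R₂ → (x, (m k).eval ops ![x, x, w, w]) ∈ W := by
    intro k
    induction k with
    | zero =>
      intro _
      refine ⟨SetRel.id, h2id, fun x y z w _ _ _ _ => ?_⟩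
      rw [hday0 x x w w]
      rfl
    | succ k ih =>
      intro hk
      have hkd : k < d := hk
      obtain ⟨W, hW, hWmem⟩ := ih hkd.le
      rcases Nat.even_or_odd k with hpar | hpar
      · refine ⟨W, hW, fun x y z w h1 h2 h3 h4 => ?_⟩
        rw [← hdayE k hkd hpar x w]
        exact hWmem x y z w h1 h2 h3 h4
      · refine ⟨SetRel.comp W (SetRel.comp (E k) (SetRel.comp (M k) (Prod.swap ⁻¹' (E (k + 1))))),
          h2co _ hW _ (h2co _ (hE2 k) _ (h2co _ (hM2 k) _ (h2sw _ (hE2 (k + 1))))), ?_⟩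
        intro x y z w h1 h2 h3 h4
        refine ⟨(m k).eval ops ![x, x, w, w], hWmem x y z w h1 h2 h3 h4,
          (m k).eval ops ![x, y, z, w], hEmem k hkd.le x y z w h1 h2 h3 h4,
          (m (k + 1)).eval ops ![x, y, z, w], hMmem k hkd hpar x y z w h3, ?_⟩
        exact hEmem (k + 1) hk x y z w h1 h2 h3 h4
  obtain ⟨W, hW, hWmem⟩ := key d le_rfl
  refine h2dc W hW T ?_
  intro p hp
  obtain ⟨y, hxy, hyS'⟩ := hTsub hp
  obtain ⟨z, hyz, hzw⟩ := hS'sub hyS'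
  have := hWmem p.1 y z p.2 (by simpa using hp) hxy hyz hzw
  rwa [haydd p.1 p.1 p.2 p.2] at this
end

section
/- Two superuniformities ℰ and ℰ' on a set S permute (ℰ ∘ ℰ' = ℰ' ∘ ℰ) if and only if their join in the lattice of superuniformities equals ℰ ∘ ℰ'. -/
open Filter Set

variable {α : Type*}

/-- Composition of filters of relations: the filter generated by compositions
of members. -/
def fComp (F G : Filter (α × α)) : Filter (α × α) :=
  F.lift fun U => G.lift' fun V => SetRel.comp U V

/-- An ideal in the lattice of filters of relations (filters carry the
reverse-inclusion order, which is Mathlib's order on `Filter`): nonempty,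
downward closed, and closed under finite joins. -/
def IsFilIdeal (ℰ : Set (Filter (α × α))) : Prop :=
  ℰ.Nonempty ∧ (∀ F ∈ ℰ, ∀ G ≤ F, G ∈ ℰ) ∧ (∀ F ∈ ℰ, ∀ G ∈ ℰ, F ⊔ G ∈ ℰ)

/-- A superuniformity: an ideal of filters of relations containing the
principal filter on the diagonal, closed under opposites of filters, and
closed under composition of filters. -/
def IsSuperUnif (ℰ : Set (Filter (α × α))) : Prop :=
  IsFilIdeal ℰ ∧ 𝓟 SetRel.id ∈ ℰ ∧ (∀ F ∈ ℰ, Filter.map Prod.swap F ∈ ℰ) ∧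
    (∀ F ∈ ℰ, ∀ G ∈ ℰ, fComp F G ∈ ℰ)

/-- Composition of ideals of filters: the ideal generated by the filter
compositions of members (a directed family, hence the downward closure). -/
def filIdealComp (ℰ ℰ' : Set (Filter (α × α))) : Set (Filter (α × α)) :=
  {H | ∃ F ∈ ℰ, ∃ G ∈ ℰ', H ≤ fComp F G}

/-- Composition of a nonempty list of filters of relations. -/
def filListComp : List (Filter (α × α)) → Filter (α × α)
  | [] => 𝓟 SetRel.id
  | [F] => F
  | F :: G :: l => fComp F (filListComp (G :: l))

/-- The set of finite (nonempty) compositions of filters from `X`. -/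
def filComps (X : Set (Filter (α × α))) : Set (Filter (α × α)) :=
  {H | ∃ l : List (Filter (α × α)), l ≠ [] ∧ (∀ F ∈ l, F ∈ X) ∧ H = filListComp l}

/-- The ideal of filters generated by a set `G` of filters: everything below a
finite join of members. -/
def filIdealGen (G : Set (Filter (α × α))) : Set (Filter (α × α)) :=
  {H | ∃ s : Finset (Filter (α × α)), ↑s ⊆ G ∧ H ≤ s.sup id}

/-- The join of two superuniformities: the ideal generated by all finite
compositions of filters from their union. -/
def suJoin (ℰ ℰ' : Set (Filter (α × α))) : Set (Filter (α × α)) :=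
  filIdealGen (filComps (ℰ ∪ ℰ'))

/-- The join of a family of superuniformities. -/
def suSup (S : Set (Set (Filter (α × α)))) : Set (Filter (α × α)) :=
  filIdealGen (filComps (⋃₀ S))

lemma compRel_idRel' (U : Set (α × α)) : SetRel.comp U SetRel.id = U := by
  ext ⟨x, y⟩
  simp [SetRel.mem_comp, SetRel.id]

lemma mem_fComp {F G : Filter (α × α)} {s : Set (α × α)} :
    s ∈ fComp F G ↔ ∃ U ∈ F, ∃ V ∈ G, SetRel.comp U V ⊆ s := by
  have hm : Monotone (fun U : Set (α × α) => G.lift' fun V => SetRel.comp U V) := by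
    intro U U' hU
    exact Filter.lift'_mono' fun V _ => SetRel.comp_subset_comp hU subset_rfl
  rw [fComp, Filter.mem_lift_sets hm]
  refine exists_congr fun U => and_congr_right fun _ => ?_
  rw [Filter.mem_lift'_sets (fun V V' h => SetRel.comp_subset_comp subset_rfl h)]

lemma fComp_mono {F F' G G' : Filter (α × α)} (hF : F ≤ F') (hG : G ≤ G') :
    fComp F G ≤ fComp F' G' := by
  intro s hs
  rcases mem_fComp.1 hs with ⟨U, hU, V, hV, hsub⟩
  exact mem_fComp.2 ⟨U, hF hU, V, hG hV, hsub⟩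

lemma fComp_assoc (F G H : Filter (α × α)) :
    fComp (fComp F G) H = fComp F (fComp G H) := by
  apply le_antisymm
  · intro s hs
    rcases mem_fComp.1 hs with ⟨U, hU, W, hW, hsub⟩
    rcases mem_fComp.1 hW with ⟨V, hV, X, hX, hsub'⟩
    refine mem_fComp.2 ⟨SetRel.comp U V, mem_fComp.2 ⟨U, hU, V, hV, subset_rfl⟩, X, hX, ?_⟩
    rw [SetRel.comp_assoc]
    exact (SetRel.comp_subset_comp subset_rfl hsub').trans hsub
  · intro s hs
    rcases mem_fComp.1 hs with ⟨W, hW, X, hX, hsub⟩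
    rcases mem_fComp.1 hW with ⟨U, hU, V, hV, hsub'⟩
    refine mem_fComp.2 ⟨U, hU, SetRel.comp V X, mem_fComp.2 ⟨V, hV, X, hX, subset_rfl⟩, ?_⟩
    rw [← SetRel.comp_assoc]
    exact (SetRel.comp_subset_comp hsub' subset_rfl).trans hsub

lemma fComp_idRight (F : Filter (α × α)) : fComp F (𝓟 SetRel.id) = F := by
  apply le_antisymm
  · intro s hs
    exact mem_fComp.2 ⟨s, hs, SetRel.id, mem_principal_self _, by rw [compRel_idRel']⟩
  · intro s hs
    rcases mem_fComp.1 hs with ⟨U, hU, V, hV, hsub⟩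
    have : U ⊆ s := by
      refine Subset.trans ?_ hsub
      haveI := SetRel.id_subset_iff.1 (mem_principal.1 hV)
      exact SetRel.left_subset_comp
    exact mem_of_superset hU this

lemma fComp_idLeft (F : Filter (α × α)) : fComp (𝓟 SetRel.id) F = F := by
  apply le_antisymm
  · intro s hs
    exact mem_fComp.2 ⟨SetRel.id, mem_principal_self _, s, hs, by rw [SetRel.id_comp]⟩
  · intro s hs
    rcases mem_fComp.1 hs with ⟨U, hU, V, hV, hsub⟩
    have : V ⊆ s :=
      haveI := SetRel.id_subset_iff.1 (mem_principal.1 hU)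
      SetRel.right_subset_comp.trans hsub
    exact mem_of_superset hV this

lemma compRel_swap_preimage (U V : Set (α × α)) :
    Prod.swap ⁻¹' (SetRel.comp U V) = SetRel.comp (Prod.swap ⁻¹' V) (Prod.swap ⁻¹' U) := by
  ext ⟨x, y⟩
  simp only [mem_preimage, Prod.swap_prod_mk, SetRel.mem_comp]
  exact ⟨fun ⟨z, h1, h2⟩ => ⟨z, h2, h1⟩, fun ⟨z, h1, h2⟩ => ⟨z, h2, h1⟩⟩

lemma map_swap_fComp (F G : Filter (α × α)) :
    Filter.map Prod.swap (fComp F G) = fComp (Filter.map Prod.swap G) (Filter.map Prod.swap F) := by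
  apply le_antisymm
  · intro s hs
    rcases mem_fComp.1 hs with ⟨V', hV', U', hU', hsub⟩
    rw [mem_map] at hV' hU'
    refine mem_map.2 (mem_fComp.2 ⟨Prod.swap ⁻¹' U', hU', Prod.swap ⁻¹' V', hV', ?_⟩)
    rw [← compRel_swap_preimage]
    exact preimage_mono hsub
  · intro s hs
    rcases mem_map.1 hs with hs'
    rcases mem_fComp.1 hs' with ⟨U, hU, V, hV, hsub⟩
    refine mem_fComp.2 ⟨Prod.swap ⁻¹' V, ?_, Prod.swap ⁻¹' U, ?_, ?_⟩
    · rw [mem_map]; simpa [preimage_preimage] using hV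
    · rw [mem_map]; simpa [preimage_preimage] using hU
    · rw [← compRel_swap_preimage]
      exact preimage_mono hsub








lemma filIdealComp_down {ℰ ℰ' : Set (Filter (α × α))} {H H' : Filter (α × α)}
    (hH : H ∈ filIdealComp ℰ ℰ') (hle : H' ≤ H) : H' ∈ filIdealComp ℰ ℰ' := by
  rcases hH with ⟨F, hF, G, hG, hle'⟩
  exact ⟨F, hF, G, hG, hle.trans hle'⟩

lemma filIdealComp_sup {ℰ ℰ' : Set (Filter (α × α))}
    (h : IsSuperUnif ℰ) (h' : IsSuperUnif ℰ') {H H' : Filter (α × α)}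
    (hH : H ∈ filIdealComp ℰ ℰ') (hH' : H' ∈ filIdealComp ℰ ℰ') :
    H ⊔ H' ∈ filIdealComp ℰ ℰ' := by
  rcases hH with ⟨F, hF, G, hG, hle⟩
  rcases hH' with ⟨F', hF', G', hG', hle'⟩
  refine ⟨F ⊔ F', h.1.2.2 F hF F' hF', G ⊔ G', h'.1.2.2 G hG G' hG', ?_⟩
  exact sup_le (hle.trans (fComp_mono le_sup_left le_sup_left))
    (hle'.trans (fComp_mono le_sup_right le_sup_right))

lemma mem_filIdealComp_left {ℰ ℰ' : Set (Filter (α × α))}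
    (h' : IsSuperUnif ℰ') {F : Filter (α × α)} (hF : F ∈ ℰ) :
    F ∈ filIdealComp ℰ ℰ' :=
  ⟨F, hF, 𝓟 SetRel.id, h'.2.1, (fComp_idRight F).ge⟩

lemma mem_filIdealComp_right {ℰ ℰ' : Set (Filter (α × α))}
    (h : IsSuperUnif ℰ) {F : Filter (α × α)} (hF : F ∈ ℰ') :
    F ∈ filIdealComp ℰ ℰ' :=
  ⟨𝓟 SetRel.id, h.2.1, F, hF, (fComp_idLeft F).ge⟩

lemma listComp_mem {ℰ ℰ' : Set (Filter (α × α))}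
    (h : IsSuperUnif ℰ) (h' : IsSuperUnif ℰ')
    (hperm : filIdealComp ℰ ℰ' = filIdealComp ℰ' ℰ) :
    ∀ l : List (Filter (α × α)), l ≠ [] → (∀ F ∈ l, F ∈ ℰ ∪ ℰ') →
      filListComp l ∈ filIdealComp ℰ ℰ' := by
  intro l
  induction l with
  | nil => intro hne _; exact absurd rfl hne
  | cons F t ih =>
    intro _ hmem
    have hF : F ∈ ℰ ∪ ℰ' := hmem F (List.mem_cons_self)
    match t with
    | [] =>
      cases hF with
      | inl hF => exact mem_filIdealComp_left h' hF
      | inr hF => exact mem_filIdealComp_right h hF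
    | G :: t' =>
      have htail : filListComp (G :: t') ∈ filIdealComp ℰ ℰ' :=
        ih (by simp) (fun X hX => hmem X (List.mem_cons_of_mem F hX))
      rcases htail with ⟨F₁, hF₁, G₁, hG₁, hle⟩
      have hcomp : filListComp (F :: G :: t') = fComp F (filListComp (G :: t')) := rfl
      rw [hcomp]
      have hle2 : fComp F (filListComp (G :: t')) ≤ fComp F (fComp F₁ G₁) :=
        fComp_mono le_rfl hle
      cases hF with
      | inl hF =>
        refine filIdealComp_down ⟨fComp F F₁, h.2.2.2 F hF F₁ hF₁, G₁, hG₁, ?_⟩ hle2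
        rw [fComp_assoc]
      | inr hF =>
        have hFF₁ : fComp F F₁ ∈ filIdealComp ℰ ℰ' := by
          rw [hperm]; exact ⟨F, hF, F₁, hF₁, le_rfl⟩
        rcases hFF₁ with ⟨F₂, hF₂, G₂, hG₂, hle3⟩
        refine filIdealComp_down ⟨F₂, hF₂, fComp G₂ G₁, h'.2.2.2 G₂ hG₂ G₁ hG₁, ?_⟩ hle2
        calc fComp F (fComp F₁ G₁) = fComp (fComp F F₁) G₁ := (fComp_assoc _ _ _).symm
          _ ≤ fComp (fComp F₂ G₂) G₁ := fComp_mono hle3 le_rfl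
          _ = fComp F₂ (fComp G₂ G₁) := fComp_assoc _ _ _

lemma pair_mem_filComps {X : Set (Filter (α × α))} {F G : Filter (α × α)}
    (hF : F ∈ X) (hG : G ∈ X) : fComp F G ∈ filComps X := by
  refine ⟨[F, G], by simp, ?_, rfl⟩
  intro Y hY
  simp only [List.mem_cons, List.not_mem_nil, or_false] at hY
  rcases hY with rfl | rfl
  exacts [hF, hG]

lemma fComp_mem_suJoin {ℰ ℰ' : Set (Filter (α × α))} {F G : Filter (α × α)}
    (hF : F ∈ ℰ ∪ ℰ') (hG : G ∈ ℰ ∪ ℰ') : fComp F G ∈ suJoin ℰ ℰ' := by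
  refine ⟨{fComp F G}, ?_, by simp⟩
  intro Y hY
  simp only [Finset.coe_singleton, mem_singleton_iff] at hY
  subst hY
  exact pair_mem_filComps hF hG

lemma filIdealComp_subset_suJoin (ℰ ℰ' : Set (Filter (α × α))) :
    filIdealComp ℰ ℰ' ⊆ suJoin ℰ ℰ' := by
  rintro H ⟨F, hF, G, hG, hle⟩
  rcases fComp_mem_suJoin (Or.inl hF : F ∈ ℰ ∪ ℰ') (Or.inr hG) with ⟨t, ht, hle'⟩
  exact ⟨t, ht, hle.trans hle'⟩

lemma finsetSup_mem {ℰ ℰ' : Set (Filter (α × α))}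
    (h : IsSuperUnif ℰ) (h' : IsSuperUnif ℰ')
    (hperm : filIdealComp ℰ ℰ' = filIdealComp ℰ' ℰ)
    (s : Finset (Filter (α × α))) (hs : ↑s ⊆ filComps (ℰ ∪ ℰ')) :
    s.sup id ∈ filIdealComp ℰ ℰ' := by
  classical
  induction s using Finset.induction_on with
  | empty =>
    refine ⟨𝓟 SetRel.id, h.2.1, 𝓟 SetRel.id, h'.2.1, ?_⟩
    simp
  | @insert a s' _ ih =>
    rw [Finset.sup_insert]
    have haX : a ∈ filComps (ℰ ∪ ℰ') := hs (by simp)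
    obtain ⟨l, hne, hmem, rfl⟩ := haX
    exact filIdealComp_sup h h' (listComp_mem h h' hperm l hne hmem)
      (ih (fun X hX => hs (by simp [hX])))

lemma filIdealComp_swap_subset {ℰ ℰ' : Set (Filter (α × α))}
    (h : IsSuperUnif ℰ) (h' : IsSuperUnif ℰ') {H : Filter (α × α)}
    (hH : H ∈ filIdealComp ℰ ℰ') : Filter.map Prod.swap H ∈ filIdealComp ℰ' ℰ := by
  rcases hH with ⟨F, hF, G, hG, hle⟩
  refine ⟨Filter.map Prod.swap G, h'.2.2.1 G hG, Filter.map Prod.swap F, h.2.2.1 F hF, ?_⟩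
  calc Filter.map Prod.swap H ≤ Filter.map Prod.swap (fComp F G) := Filter.map_mono hle
    _ = fComp (Filter.map Prod.swap G) (Filter.map Prod.swap F) := map_swap_fComp F G


theorem stmt16 (ℰ ℰ' : Set (Filter (α × α)))
    (h : IsSuperUnif ℰ) (h' : IsSuperUnif ℰ') :
    filIdealComp ℰ ℰ' = filIdealComp ℰ' ℰ ↔ suJoin ℰ ℰ' = filIdealComp ℰ ℰ' := by
  constructor
  · intro hperm
    apply Subset.antisymm
    · rintro H ⟨s, hs, hle⟩
      exact filIdealComp_down (finsetSup_mem h h' hperm s hs) hle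
    · exact filIdealComp_subset_suJoin ℰ ℰ'
  · intro hjoin
    have h1 : filIdealComp ℰ' ℰ ⊆ filIdealComp ℰ ℰ' := by
      intro H hH
      rw [← hjoin]
      rcases hH with ⟨G, hG, F, hF, hle⟩
      rcases fComp_mem_suJoin (Or.inr hG : G ∈ ℰ ∪ ℰ') (Or.inl hF) with ⟨t, ht, hle'⟩
      exact ⟨t, ht, hle.trans hle'⟩
    apply Subset.antisymm
    · intro H hH
      have h2 : Filter.map Prod.swap H ∈ filIdealComp ℰ' ℰ :=
        filIdealComp_swap_subset h h' hH
      have h3 : Filter.map Prod.swap H ∈ filIdealComp ℰ ℰ' := h1 h2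
      have h4 := filIdealComp_swap_subset h h' h3
      rwa [Filter.map_map, show (Prod.swap ∘ Prod.swap : α × α → α × α) = id from
        funext Prod.swap_swap, Filter.map_id] at h4
    · exact h1
end
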